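/- Let n = 2^α for a positive integer α, and let P_n be the path graph on vertices 1, …, n. Then no eigenvector of L(P_n) has a zero component; that is, the path on 2^α vertices has no soft node. (Equivalently, for all integers k, j with 1 ≤ k, j ≤ n, cos( π(k−1)(2j−1) / (2n) ) ≠ 0, since every eigenvalue of L(P_n) is simple with eigenvector v^k_j = cos( π(k−1)(2j−1)/(2n) ).) -/

import Mathlib

open Matrix

/-- The Laplacian matrix of a finite simple graph: degree on the diagonal,
`-1` at entries corresponding to edges, `0` elsewhere. -/
def lap {V : Type*} [Fintype V] [DecidableEq V] (G : SimpleGraph V) [DecidableRel G.Adj] :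
    Matrix V V ℝ :=
  Matrix.of fun v w => if v = w then (G.degree v : ℝ) else if G.Adj v w then -1 else 0

/-- The path (chain) graph on `n` vertices `0, 1, …, n-1`, with edges between
consecutive integers. -/
def pathGraph (n : ℕ) : SimpleGraph (Fin n) where
  Adj a b := (a : ℕ) + 1 = b ∨ (b : ℕ) + 1 = a
  symm := ⟨fun _ _ h => Or.symm h⟩
  loopless := ⟨fun a h => by rcases h with h | h <;> omega⟩

instance (n : ℕ) : DecidableRel (pathGraph n).Adj := fun a b =>
  inferInstanceAs (Decidable (_ ∨ _))

lemma lap_mulVec {V : Type*} [Fintype V] [DecidableEq V] (G : SimpleGraph V)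
    [DecidableRel G.Adj] (x : V → ℝ) (v : V) :
    (lap G *ᵥ x) v = (G.degree v : ℝ) * x v - ∑ w ∈ G.neighborFinset v, x w := by
  have key : ∀ w, (if v = w then (G.degree v : ℝ) else if G.Adj v w then -1 else 0) * x w
      = (if v = w then (G.degree v : ℝ) * x w else 0) + (if G.Adj v w then -(x w) else 0) := by
    intro w
    by_cases h1 : v = w
    · subst h1; simp [G.irrefl]
    · by_cases h2 : G.Adj v w <;> simp [h1, h2] <;> ring
  simp only [mulVec, dotProduct, lap, of_apply, key, Finset.sum_add_distrib]
  rw [Finset.sum_ite_eq, SimpleGraph.neighborFinset_eq_filter]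
  simp [Finset.sum_filter, sub_eq_add_neg, Finset.sum_neg_distrib]
  rw [← Finset.sum_neg_distrib]
  exact Finset.sum_congr rfl fun w _ => by by_cases h : G.Adj v w <;> simp [h]

lemma pg0 (n : ℕ) (hn : 1 < n) (x : Fin n → ℝ) :
    (lap (pathGraph n) *ᵥ x) ⟨0, by omega⟩ = x ⟨0, by omega⟩ - x ⟨1, hn⟩ := by
  rw [lap_mulVec]
  have hnf : (pathGraph n).neighborFinset ⟨0, by omega⟩ = {⟨1, hn⟩} := by
    ext w
    rw [SimpleGraph.mem_neighborFinset]
    simp only [SimpleGraph.mem_neighborFinset, pathGraph, Finset.mem_singleton, Fin.ext_iff]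
    constructor
    · rintro (h | h) <;> omega
    · intro h; omega
  rw [SimpleGraph.degree, hnf]
  simp

lemma pgmid (n i : ℕ) (h : i + 2 < n) (x : Fin n → ℝ) :
    (lap (pathGraph n) *ᵥ x) ⟨i + 1, by omega⟩ =
      2 * x ⟨i + 1, by omega⟩ - x ⟨i, by omega⟩ - x ⟨i + 2, h⟩ := by
  rw [lap_mulVec]
  have hnf : (pathGraph n).neighborFinset ⟨i + 1, by omega⟩ =
      {⟨i, by omega⟩, ⟨i + 2, h⟩} := by
    ext w
    rw [SimpleGraph.mem_neighborFinset]
    simp only [SimpleGraph.mem_neighborFinset, pathGraph, Finset.mem_insert,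
      Finset.mem_singleton, Fin.ext_iff]
    constructor
    · rintro (h | h) <;> omega
    · rintro (h | h) <;> omega
  rw [SimpleGraph.degree, hnf]
  rw [Finset.sum_pair (by simp [Fin.ext_iff])]
  rw [Finset.card_insert_of_notMem (by simp [Fin.ext_iff]), Finset.card_singleton]
  push_cast
  ring

lemma pglast (n i : ℕ) (h : i + 2 = n) (x : Fin n → ℝ) :
    (lap (pathGraph n) *ᵥ x) ⟨i + 1, by omega⟩ = x ⟨i + 1, by omega⟩ - x ⟨i, by omega⟩ := by
  rw [lap_mulVec]
  have hnf : (pathGraph n).neighborFinset ⟨i + 1, by omega⟩ = {⟨i, by omega⟩} := by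
    ext w
    rw [SimpleGraph.mem_neighborFinset]
    simp only [SimpleGraph.mem_neighborFinset, pathGraph, Finset.mem_singleton, Fin.ext_iff]
    constructor
    · rintro (h | h) <;> omega
    · intro h; omega
  rw [SimpleGraph.degree, hnf]
  simp


/-- The path on `n = 2^α` vertices has no soft node: no eigenvector of its Laplacian has
a zero component. Equivalently (0-indexed), `cos (π k (2j+1) / (2n)) ≠ 0` for all
`k, j ∈ {0, …, n-1}`. -/
theorem path_pow_two_no_soft_node (α : ℕ) (hα : 0 < α) (n : ℕ) (hn : n = 2 ^ α) :
    (∀ (μ : ℝ) (x : Fin n → ℝ), x ≠ 0 → lap (pathGraph n) *ᵥ x = μ • x →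
      ∀ j : Fin n, x j ≠ 0) ∧
    (∀ k j : Fin n,
      Real.cos (Real.pi * (k : ℕ) * (2 * (j : ℕ) + 1) / (2 * n)) ≠ 0) := by
  constructor
  · -- Part 1: no soft node
    intro μ x hx hL j hxj
    have hn2 : 2 ≤ n := by
      rw [hn]
      calc 2 = 2 ^ 1 := (pow_one 2).symm
      _ ≤ 2 ^ α := Nat.pow_le_pow_right (by norm_num) hα
    obtain ⟨m, hm⟩ : ∃ m, n = m + 2 := ⟨n - 2, by omega⟩
    subst hm
    -- extract the three families of equations
    have e0 : x ⟨1, by omega⟩ = (1 - μ) * x ⟨0, by omega⟩ := by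
      have h := congrFun hL ⟨0, by omega⟩
      rw [pg0 (m+2) (by omega) x] at h
      simp only [Pi.smul_apply, smul_eq_mul] at h
      linear_combination -h
    have emid : ∀ i (hi : i + 2 < m + 2),
        x ⟨i+2, by omega⟩ = (2 - μ) * x ⟨i+1, by omega⟩ - x ⟨i, by omega⟩ := by
      intro i hi
      have h := congrFun hL ⟨i+1, by omega⟩
      rw [pgmid (m+2) i hi x] at h
      simp only [Pi.smul_apply, smul_eq_mul] at h
      linear_combination -h
    have elast : x ⟨m, by omega⟩ = (1 - μ) * x ⟨m+1, by omega⟩ := by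
      have h := congrFun hL ⟨m+1, by omega⟩
      rw [pglast (m+2) m rfl x] at h
      simp only [Pi.smul_apply, smul_eq_mul] at h
      linear_combination -h
    -- complex root of z^2 - (2-μ) z + 1
    obtain ⟨e, he⟩ := IsAlgClosed.exists_pow_nat_eq (k := ℂ) (((2:ℂ) - μ)^2 - 4) (n := 2)
      (by norm_num)
    obtain ⟨r, hroot⟩ : ∃ r : ℂ, r^2 - ((2:ℂ) - μ) * r + 1 = 0 :=
      ⟨(((2:ℂ) - μ) + e)/2, by linear_combination he/4⟩
    have hr0 : r ≠ 0 := by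
      intro h; rw [h] at hroot; simp at hroot
    by_cases hr1 : r = 1
    · -- μ = 0 : eigenvector is constant
      have hμ : μ = 0 := by
        rw [hr1] at hroot
        have : ((μ : ℂ)) = 0 := by linear_combination hroot
        exact_mod_cast this
      subst hμ
      have claim : ∀ i (_ : i + 2 ≤ m + 2),
          (x ⟨i, by omega⟩ = x ⟨0, by omega⟩ ∧ x ⟨i+1, by omega⟩ = x ⟨0, by omega⟩) := by
        intro i
        induction i with
        | zero => intro _; exact ⟨rfl, by linarith [e0]⟩
        | succ i ih =>
          intro h
          obtain ⟨h1, h2⟩ := ih (by omega)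
          refine ⟨h2, ?_⟩
          have := emid i (by omega)
          rw [h1, h2] at this
          linarith [this]
      have hall : ∀ i (h : i < m + 2), x ⟨i, h⟩ = x ⟨0, by omega⟩ := by
        intro i h
        by_cases h' : i ≤ m
        · exact (claim i (by omega)).1
        · have : i = m + 1 := by omega
          subst this
          exact (claim m (by omega)).2
      have hx0 : x ⟨0, by omega⟩ = 0 := by
        rw [← hall j.val j.isLt, Fin.eta] ; exact hxj
      apply hx
      funext i
      have := hall i.val i.isLt
      rw [Fin.eta] at this
      rw [this, hx0]; rfl
    · by_cases hrm1 : r = -1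
      · -- μ = 4 : impossible
        have hμ : μ = 4 := by
          rw [hrm1] at hroot
          have : ((μ : ℂ)) = 4 := by linear_combination -hroot
          exact_mod_cast this
        subst hμ
        have claim : ∀ i (_ : i + 2 ≤ m + 2),
            (x ⟨i, by omega⟩ = (-1:ℝ)^i * (2*(i:ℝ)+1) * x ⟨0, by omega⟩ ∧
             x ⟨i+1, by omega⟩ = (-1:ℝ)^(i+1) * (2*((i:ℝ)+1)+1) * x ⟨0, by omega⟩) := by
          intro i
          induction i with
          | zero =>
            intro _
            constructor
            · norm_num
            · rw [e0]; push_cast; ring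
          | succ i ih =>
            intro h
            obtain ⟨h1, h2⟩ := ih (by omega)
            have h3 := emid i (by omega)
            rw [h1, h2] at h3
            constructor
            · rw [h2]; push_cast; ring
            · rw [h3]; push_cast; ring
        obtain ⟨hFm, hFm1⟩ := claim m (by omega)
        have h := elast
        rw [hFm, hFm1] at h
        have hx0 : x ⟨0, by omega⟩ = 0 := by
          have hkey : (-1:ℝ)^m * ((4*(m:ℝ)+8) * x ⟨0, by omega⟩) = 0 := by
            rw [pow_succ] at h
            linear_combination -h
          have hp : (-1:ℝ)^m ≠ 0 := pow_ne_zero _ (by norm_num)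
          have := mul_eq_zero.mp hkey
          rcases this with h' | h'
          · exact absurd h' hp
          · rcases mul_eq_zero.mp h' with h'' | h''
            · exfalso; have : (0:ℝ) < 4*(m:ℝ)+8 := by positivity
              linarith
            · exact h''
        apply hx
        funext i
        have hall : ∀ i (hi : i < m + 2), x ⟨i, hi⟩ = 0 := by
          intro i hi
          by_cases h' : i ≤ m
          · rw [(claim i (by omega)).1, hx0]; ring
          · have : i = m + 1 := by omega
            subst this
            rw [(claim m (by omega)).2, hx0]; ring
        have := hall i.val i.isLt
        rw [Fin.eta] at this
        rw [this]; rfl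
      · -- main case: r ≠ ±1
        have hr2 : r^2 - 1 ≠ 0 := by
          intro h
          have : (r - 1) * (r + 1) = 0 := by linear_combination h
          rcases mul_eq_zero.mp this with h' | h'
          · exact hr1 (by linear_combination h')
          · exact hrm1 (by linear_combination h')
        obtain ⟨A, hA⟩ : ∃ A : ℂ, A = ((x ⟨1, by omega⟩ : ℂ) * r - (x ⟨0, by omega⟩ : ℂ)) / (r^2 - 1) :=
          ⟨_, rfl⟩
        obtain ⟨B, hB⟩ : ∃ B : ℂ, B = ((x ⟨0, by omega⟩ : ℂ)) - A := ⟨_, rfl⟩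
        have hAeq' : A * (r^2 - 1) = (x ⟨1, by omega⟩ : ℂ) * r - (x ⟨0, by omega⟩ : ℂ) := by
          rw [hA]; exact div_mul_cancel₀ _ hr2
        have hu0 : ((x ⟨0, by omega⟩ : ℝ) : ℂ) * r^0 = A * r^(2*0) + B := by
          linear_combination -hB
        have hu1 : ((x ⟨1, by omega⟩ : ℝ) : ℂ) * r^1 = A * r^(2*1) + B := by
          linear_combination -hAeq' - hB
        have claim : ∀ i (_ : i + 2 ≤ m + 2),
            (((x ⟨i, by omega⟩ : ℝ) : ℂ) * r^i = A * r^(2*i) + B ∧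
             ((x ⟨i+1, by omega⟩ : ℝ) : ℂ) * r^(i+1) = A * r^(2*(i+1)) + B) := by
          intro i
          induction i with
          | zero => intro _; exact ⟨hu0, hu1⟩
          | succ i ih =>
            intro h
            obtain ⟨h1, h2⟩ := ih (by omega)
            refine ⟨h2, ?_⟩
            have h3 : ((x ⟨i+2, by omega⟩ : ℝ) : ℂ)
                = (2 - (μ:ℂ)) * ((x ⟨i+1, by omega⟩ : ℝ) : ℂ) - ((x ⟨i, by omega⟩ : ℝ) : ℂ) := by
              have := emid i (by omega)
              push_cast [this]
              ring
            linear_combination r^(i+2) * h3 + ((2 - (μ:ℂ))*r) * h2 - r^2 * h1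
              - (A*r^(2*i+2)+B) * hroot
        have hFall : ∀ i (hi : i < m + 2),
            ((x ⟨i, hi⟩ : ℝ) : ℂ) * r^i = A * r^(2*i) + B := by
          intro i hi
          by_cases h' : i ≤ m
          · exact (claim i (by omega)).1
          · have : i = m + 1 := by omega
            subst this
            exact (claim m (by omega)).2
        -- boundary at 0 gives A = B r
        have hx1c : ((x ⟨1, by omega⟩ : ℝ) : ℂ) = (1 - (μ:ℂ)) * ((x ⟨0, by omega⟩ : ℝ) : ℂ) := by
          push_cast [e0]; ring
        have key : (r - 1) * (A - B * r) = 0 := by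
          linear_combination (-1 : ℂ) * hu1 + ((1-(μ:ℂ))*r) * hu0 + r * hx1c - (A+B) * hroot
        have hAeq : A = B * r := by
          rcases mul_eq_zero.mp key with h' | h'
          · exact absurd (by linear_combination h') hr1
          · linear_combination h'
        -- B ≠ 0
        have hBne : B ≠ 0 := by
          intro hB0
          apply hx
          funext i
          have h := hFall i.val i.isLt
          rw [hAeq, hB0] at h
          simp only [zero_mul, add_zero, mul_zero, zero_add] at h
          have : ((x ⟨i.val, i.isLt⟩ : ℝ) : ℂ) = 0 := by
            rcases mul_eq_zero.mp h with h' | h'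
            · exact h'
            · exact absurd h' (pow_ne_zero _ hr0)
          rw [Fin.eta] at this
          have : x i = 0 := by exact_mod_cast this
          rw [this]; rfl
        -- boundary at the end gives r^(2n) = 1
        have hFm := hFall m (by omega)
        have hFm1 := hFall (m+1) (by omega)
        have helastc : ((x ⟨m, by omega⟩ : ℝ) : ℂ)
            = (1 - (μ:ℂ)) * ((x ⟨m+1, by omega⟩ : ℝ) : ℂ) := by
          push_cast [elast]; ring
        have s1 : ((x ⟨m, by omega⟩ : ℝ) : ℂ) * r^(m+2) = A * r^(2*m+2) + B * r^2 := by
          linear_combination r^2 * hFm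
        have s3 : ((x ⟨m, by omega⟩ : ℝ) : ℂ) * r^(m+2)
            = (1 - (μ:ℂ)) * r * (((x ⟨m+1, by omega⟩ : ℝ) : ℂ) * r^(m+1)) := by
          linear_combination r^(m+2) * helastc
        have s4 : A * r^(2*m+2) + B * r^2 = (1 - (μ:ℂ)) * r * (A * r^(2*(m+1)) + B) := by
          linear_combination (-1:ℂ) * s1 + s3 + ((1-(μ:ℂ))*r) * hFm1
        have key2 : B * ((r - 1) * (r^(2*(m+2)) - 1)) = 0 := by
          linear_combination (-1:ℂ) * s4 + (A*r^(2*m+2)+B) * hroot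
            + (r^(2*m+3) - r^(2*m+4)) * hAeq
        have hr2n : r^(2*(m+2)) = 1 := by
          rcases mul_eq_zero.mp key2 with h' | h'
          · exact absurd h' hBne
          · rcases mul_eq_zero.mp h' with h'' | h''
            · exact absurd (by linear_combination h'') hr1
            · linear_combination h''
        -- zero component gives r^(2j+1) = -1
        have hj := hFall j.val j.isLt
        rw [Fin.eta, hxj] at hj
        have hrj : r^(2*(j:ℕ)+1) = -1 := by
          have hkey : B * (r^(2*(j:ℕ)+1) + 1) = 0 := by
            push_cast at hj
            linear_combination (-1:ℂ) * hj - r^(2*(j:ℕ)) * hAeq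
          rcases mul_eq_zero.mp hkey with h' | h'
          · exact absurd h' hBne
          · linear_combination h'
        -- order argument
        have h1 : r^(2^(α+1)) = 1 := by
          have : 2^(α+1) = 2*(m+2) := by rw [pow_succ, hn]; ring
          rw [this]; exact hr2n
        have h2 : r^((2*(j:ℕ)+1)*2) = 1 := by
          rw [pow_mul, hrj]; norm_num
        have hd1 : orderOf r ∣ 2^(α+1) := orderOf_dvd_of_pow_eq_one h1
        have hd2 : orderOf r ∣ (2*(j:ℕ)+1)*2 := orderOf_dvd_of_pow_eq_one h2
        obtain ⟨β, hβle, hβ⟩ := (Nat.dvd_prime_pow Nat.prime_two).mp hd1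
        have hβ1 : β ≤ 1 := by
          by_contra hc
          push_neg at hc
          have h4 : 4 ∣ (2*(j:ℕ)+1)*2 := by
            calc (4:ℕ) = 2^2 := by norm_num
            _ ∣ 2^β := pow_dvd_pow 2 hc
            _ = orderOf r := hβ.symm
            _ ∣ _ := hd2
          omega
        have hdvd2 : orderOf r ∣ 2 := by
          rw [hβ]
          calc (2:ℕ)^β ∣ 2^1 := pow_dvd_pow 2 hβ1
          _ = 2 := pow_one 2
        have hr21 : r^2 = 1 := orderOf_dvd_iff_pow_eq_one.mp hdvd2
        have : (r - 1) * (r + 1) = 0 := by linear_combination hr21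
        rcases mul_eq_zero.mp this with h' | h'
        · exact hr1 (by linear_combination h')
        · exact hrm1 (by linear_combination h')
  · -- Part 2: cosine never vanishes
    intro k j hcos
    have hn0 : 0 < n := by rw [hn]; positivity
    rw [Real.cos_eq_zero_iff] at hcos
    obtain ⟨m, hm⟩ := hcos
    have hπ : Real.pi ≠ 0 := Real.pi_ne_zero
    have hne : (n : ℝ) ≠ 0 := by positivity
    have key : ((k : ℕ) : ℝ) * (2 * (j : ℕ) + 1) = (2 * m + 1) * n := by
      field_simp at hm
      have h2 : Real.pi * (((k:ℕ):ℝ) * (2 * (j:ℕ) + 1)) = Real.pi * ((2 * m + 1) * n) := by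
        ring_nf
        ring_nf at hm
        linear_combination Real.pi * hm
      exact mul_left_cancel₀ hπ h2
    have keyz : (k : ℤ) * (2 * (j : ℤ) + 1) = (2 * m + 1) * n := by exact_mod_cast key
    -- sign: 2*m+1 > 0
    have hmpos : 0 ≤ 2 * m + 1 := by
      by_contra h
      push_neg at h
      have h1 : (0:ℤ) ≤ (k : ℤ) * (2 * (j : ℤ) + 1) := by positivity
      have h2 : (2 * m + 1) * (n:ℤ) < 0 := by
        apply mul_neg_of_neg_of_pos h
        exact_mod_cast hn0
      omega
    set m' := m.toNat with hm'
    have hmm : m = (m' : ℤ) := by omega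
    have keyn : (k : ℕ) * (2 * (j : ℕ) + 1) = (2 * m' + 1) * n := by
      have : (k : ℤ) * (2 * (j : ℤ) + 1) = (2 * (m':ℤ) + 1) * n := by rw [← hmm]; exact keyz
      exact_mod_cast this
    have hdvd : 2 ^ α ∣ (k : ℕ) * (2 * (j : ℕ) + 1) := by
      rw [keyn, hn]; exact Dvd.intro_left _ rfl
    have hcop : Nat.Coprime (2 ^ α) (2 * (j : ℕ) + 1) := by
      apply Nat.Coprime.pow_left
      rw [Nat.coprime_two_left]
      exact ⟨j, by ring⟩
    have hk : 2 ^ α ∣ (k : ℕ) := (Nat.Coprime.dvd_of_dvd_mul_right hcop) hdvd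
    have hklt : (k : ℕ) < 2 ^ α := by rw [← hn]; exact k.isLt
    have hk0 : (k : ℕ) = 0 := by
      rcases Nat.eq_zero_or_pos (k:ℕ) with h | h
      · exact h
      · exact absurd hklt (not_lt.mpr (Nat.le_of_dvd h hk))
    rw [hk0] at keyn
    simp at keyn
    omega
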